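/- Let v_ρ > 0 and let B(z₁,r₁), …, B(z_K,r_K) be K ≥ 2 pairwise disjoint closed discs in R² with r_i > v_ρ for all i, R := max_i r_i, and suppose the discs are pairwise far apart: |z_i − z_j| > R³ for all i ≠ j. If additionally R³ is large enough that 4R·arcsin(2/R²) ≤ c·v_ρ^{−1} for a universal constant c (which holds for v_ρ large), then the μ-measure of lines hitting the union satisfies 2π ∑_{i=1}^K r_i − c'·v_ρ^{−1} ≤ μ(lines hitting ⋃_i B(z_i,r_i)) ≤ 2π ∑_{i=1}^K r_i, for a constant c' depending only on K. -/

import Mathlib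

open MeasureTheory Real Set

noncomputable def lineSet (α t : ℝ) : Set (EuclideanSpace ℝ (Fin 2)) :=
  {x | x 0 * Real.cos α + x 1 * Real.sin α = t}

noncomputable def lineMeas (A : Set (EuclideanSpace ℝ (Fin 2))) : ENNReal :=
  ∫⁻ α in Set.Ico (0:ℝ) (2 * Real.pi), ∫⁻ t in Set.Ioi (0:ℝ),
    Set.indicator {t' : ℝ | (lineSet α t' ∩ A).Nonempty} (fun _ => (1 : ENNReal)) t



lemma hit_ball_iff (α t : ℝ) (z : EuclideanSpace ℝ (Fin 2)) (r : ℝ) (hr : 0 ≤ r) :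
    (lineSet α t ∩ Metric.closedBall z r).Nonempty ↔
      |z 0 * Real.cos α + z 1 * Real.sin α - t| ≤ r := by
  constructor
  · rintro ⟨x, hx, hxb⟩
    have hx' : x 0 * Real.cos α + x 1 * Real.sin α = t := hx
    have hd : dist x z ≤ r := Metric.mem_closedBall.1 hxb
    have hdist : dist x z = Real.sqrt ((x 0 - z 0)^2 + (x 1 - z 1)^2) := by
      rw [EuclideanSpace.dist_eq, Fin.sum_univ_two]
      simp [Real.dist_eq]
    have key : |z 0 * Real.cos α + z 1 * Real.sin α - t| ≤
        Real.sqrt ((x 0 - z 0)^2 + (x 1 - z 1)^2) := by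
      rw [← hx']
      have h1 : |z 0 * Real.cos α + z 1 * Real.sin α - (x 0 * Real.cos α + x 1 * Real.sin α)|
          = |(z 0 - x 0) * Real.cos α + (z 1 - x 1) * Real.sin α| := by ring_nf
      rw [h1]
      have hcs : ((z 0 - x 0) * Real.cos α + (z 1 - x 1) * Real.sin α)^2 ≤
          ((z 0 - x 0)^2 + (z 1 - x 1)^2) * (Real.cos α ^2 + Real.sin α^2) := by
        nlinarith [sq_nonneg ((z 0 - x 0) * Real.sin α - (z 1 - x 1) * Real.cos α)]
      have := Real.sqrt_le_sqrt (by nlinarith [Real.sin_sq_add_cos_sq α] : ((z 0 - x 0) * Real.cos α + (z 1 - x 1) * Real.sin α)^2 ≤ (x 0 - z 0)^2 + (x 1 - z 1)^2)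
      rwa [Real.sqrt_sq_eq_abs] at this
    calc |z 0 * Real.cos α + z 1 * Real.sin α - t| ≤ _ := key
      _ = dist x z := hdist.symm
      _ ≤ r := hd
  · intro h
    set a := z 0 * Real.cos α + z 1 * Real.sin α with ha
    refine ⟨(WithLp.equiv 2 (Fin 2 → ℝ)).symm ![z 0 - (a - t) * Real.cos α, z 1 - (a - t) * Real.sin α], ?_, ?_⟩
    · show (z 0 - (a - t) * Real.cos α) * Real.cos α + (z 1 - (a - t) * Real.sin α) * Real.sin α = t
      have expand : (z 0 - (a - t) * Real.cos α) * Real.cos α + (z 1 - (a - t) * Real.sin α) * Real.sin α = a - (a - t) * (Real.sin α^2 + Real.cos α^2) := by rw [ha]; ring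
      rw [expand, Real.sin_sq_add_cos_sq]; ring
    · rw [Metric.mem_closedBall, EuclideanSpace.dist_eq, Fin.sum_univ_two]
      have : dist ((WithLp.equiv 2 (Fin 2 → ℝ)).symm ![z 0 - (a - t) * Real.cos α, z 1 - (a - t) * Real.sin α] 0) (z 0) ^2 + dist ((WithLp.equiv 2 (Fin 2 → ℝ)).symm ![z 0 - (a - t) * Real.cos α, z 1 - (a - t) * Real.sin α] 1) (z 1)^2 = (a-t)^2 := by
        show (dist (z 0 - (a - t) * Real.cos α) (z 0))^2 + (dist (z 1 - (a - t) * Real.sin α) (z 1))^2 = (a-t)^2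
        rw [Real.dist_eq, Real.dist_eq, sq_abs, sq_abs]
        have := Real.sin_sq_add_cos_sq α
        nlinarith
      rw [this, Real.sqrt_sq_eq_abs]
      rwa [ha]
-- inner integral = volume of set
lemma inner_int (S : Set ℝ) (hS : MeasurableSet S) :
    (∫⁻ t in Set.Ioi (0:ℝ), Set.indicator S (fun _ => (1 : ENNReal)) t) = volume (S ∩ Set.Ioi 0) := by
  rw [lintegral_indicator hS, setLIntegral_one, Measure.restrict_apply hS]

lemma vol_Icc_Ioi (u v : ℝ) :
    volume (Set.Icc u v ∩ Set.Ioi 0) = ENNReal.ofReal (v - max u 0) := by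
  apply le_antisymm
  · calc volume (Set.Icc u v ∩ Set.Ioi 0) ≤ volume (Set.Icc (max u 0) v) := by
          apply measure_mono
          rintro t ⟨⟨h1, h2⟩, h3⟩
          exact ⟨le_of_max_le_left (max_le h1 (le_of_lt h3)) |>.trans le_rfl |>.trans_eq rfl |> fun _ => max_le h1 (le_of_lt h3), h2⟩
      _ = ENNReal.ofReal (v - max u 0) := Real.volume_Icc
  · calc ENNReal.ofReal (v - max u 0) = volume (Set.Ioc (max u 0) v) := Real.volume_Ioc.symm
      _ ≤ volume (Set.Icc u v ∩ Set.Ioi 0) := by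
          apply measure_mono
          rintro t ⟨h1, h2⟩
          exact ⟨⟨(le_max_left u 0).trans h1.le, h2⟩, lt_of_le_of_lt (le_max_right u 0) h1⟩
-- m' and its properties
noncomputable def clip (r x : ℝ) : ℝ := max 0 (min (x + r) (2*r))

lemma clip_eq (r x : ℝ) (hr : 0 ≤ r) :
    ENNReal.ofReal ((x + r) - max (x - r) 0) = ENNReal.ofReal (clip r x) := by
  unfold clip
  rcases le_total (x - r) 0 with h | h
  · rw [max_eq_right h, min_eq_left (by linarith)]
    rw [sub_zero]
    rcases le_total (x + r) 0 with h2 | h2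
    · rw [max_eq_left h2, ENNReal.ofReal_of_nonpos h2, ENNReal.ofReal_zero]
    · rw [max_eq_right h2]
  · rw [max_eq_left h, min_eq_right (by linarith), max_eq_right (by linarith)]
    ring_nf

lemma clip_add (r y : ℝ) (hr : 0 ≤ r) : clip r y + clip r (-y) = 2 * r := by
  unfold clip
  rcases le_total y (-r) with h | h
  · rw [max_eq_left (by simp [min_le_iff]; left; linarith), min_eq_right (by linarith), max_eq_right (by linarith)]
    ring
  · rcases le_total y r with h2 | h2
    · rw [min_eq_left (by linarith), max_eq_right (by linarith), min_eq_left (by linarith), max_eq_right (by linarith)]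
      ring
    · rw [min_eq_right (by linarith), max_eq_right (by linarith), max_eq_left (by simp [min_le_iff]; left; linarith)]
      ring

noncomputable def aCo (z : EuclideanSpace ℝ (Fin 2)) (α : ℝ) : ℝ :=
  z 0 * Real.cos α + z 1 * Real.sin α

lemma aCo_cont (z : EuclideanSpace ℝ (Fin 2)) : Continuous (aCo z) := by
  unfold aCo; fun_prop

lemma clip_cont (r : ℝ) : Continuous (clip r) := by
  unfold clip; fun_prop

lemma aCo_add_pi (z : EuclideanSpace ℝ (Fin 2)) (α : ℝ) : aCo z (α + π) = - aCo z α := by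
  unfold aCo; rw [Real.cos_add_pi, Real.sin_add_pi]; ring


lemma lint_clip (z : EuclideanSpace ℝ (Fin 2)) (r : ℝ) (hr : 0 ≤ r) :
    (∫⁻ α in Set.Ico (0:ℝ) (2*π), ENNReal.ofReal (clip r (aCo z α)))
      = ENNReal.ofReal (2 * π * r) := by
  have hcont : Continuous (fun α => clip r (aCo z α)) := (clip_cont r).comp (aCo_cont z)
  have hint : IntegrableOn (fun α => clip r (aCo z α)) (Set.Ico 0 (2*π)) :=
    (hcont.continuousOn.integrableOn_Icc).mono_set Set.Ico_subset_Icc_self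
  rw [← MeasureTheory.ofReal_integral_eq_lintegral_ofReal hint
      (Filter.Eventually.of_forall fun x => le_max_left _ _)]
  congr 1
  have h1 : ∫ α in Set.Ico (0:ℝ) (2*π), clip r (aCo z α)
      = ∫ α in (0:ℝ)..(2*π), clip r (aCo z α) := by
    rw [MeasureTheory.integral_Ico_eq_integral_Ioo,
      intervalIntegral.integral_of_le (by positivity), MeasureTheory.integral_Ioc_eq_integral_Ioo]
  rw [h1]
  have h2 : (∫ α in (0:ℝ)..π, clip r (aCo z α)) + (∫ α in π..(2*π), clip r (aCo z α))
      = ∫ α in (0:ℝ)..(2*π), clip r (aCo z α) :=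
    intervalIntegral.integral_add_adjacent_intervals
      (hcont.intervalIntegrable _ _) (hcont.intervalIntegrable _ _)
  rw [← h2]
  have h3 : ∫ α in π..(2*π), clip r (aCo z α) = ∫ α in (0:ℝ)..π, clip r (aCo z (α + π)) := by
    rw [intervalIntegral.integral_comp_add_right (fun x => clip r (aCo z x)) π]
    norm_num [two_mul]
  rw [h3]
  have h5 : (∫ α in (0:ℝ)..π, clip r (aCo z α)) + (∫ α in (0:ℝ)..π, clip r (aCo z (α + π)))
      = ∫ α in (0:ℝ)..π, (clip r (aCo z α) + clip r (aCo z (α + π))) :=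
    (intervalIntegral.integral_add (hcont.intervalIntegrable _ _)
      ((hcont.comp (by fun_prop : Continuous (fun α : ℝ => α + π))).intervalIntegrable _ _)).symm
  rw [h5]
  have h4 : ∀ α, clip r (aCo z α) + clip r (aCo z (α + π)) = 2 * r := by
    intro α; rw [aCo_add_pi]; exact clip_add r (aCo z α) hr
  simp_rw [h4]
  rw [intervalIntegral.integral_const]
  simp [smul_eq_mul]
  ring
lemma bonferroni {ι : Type*} [DecidableEq ι] (μ : Measure ℝ) (s : Finset ι)
    (A : ι → Set ℝ) (hA : ∀ i, MeasurableSet (A i)) :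
    (∑ i ∈ s, μ (A i)) ≤ μ (⋃ i ∈ s, A i) + ∑ p ∈ s.offDiag, μ (A p.1 ∩ A p.2) := by
  induction s using Finset.induction_on with
  | empty => simp
  | @insert a s ha ih =>
    have hU : MeasurableSet (⋃ i ∈ s, A i) := by
      exact MeasurableSet.biUnion s.countable_toSet (fun i _ => hA i)
    have key : μ (A a ∪ ⋃ i ∈ s, A i) + μ (A a ∩ ⋃ i ∈ s, A i) = μ (A a) + μ (⋃ i ∈ s, A i) :=
      measure_union_add_inter (A a) hU
    have hint : μ (A a ∩ ⋃ i ∈ s, A i) ≤ ∑ i ∈ s, μ (A a ∩ A i) := by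
      rw [Set.inter_iUnion₂]
      exact measure_biUnion_finset_le s _
    have hoff : (∑ p ∈ s.offDiag, μ (A p.1 ∩ A p.2)) + ∑ i ∈ s, μ (A a ∩ A i)
        ≤ ∑ p ∈ (insert a s).offDiag, μ (A p.1 ∩ A p.2) := by
      rw [Finset.offDiag_insert ha]
      have hd1 : Disjoint s.offDiag ({a} ×ˢ s) := by
        rw [Finset.disjoint_left]
        rintro ⟨p1, p2⟩ hp hq
        rw [Finset.mem_product, Finset.mem_singleton] at hq
        exact ha (hq.1 ▸ (Finset.mem_offDiag.1 hp).1)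
      calc (∑ p ∈ s.offDiag, μ (A p.1 ∩ A p.2)) + ∑ i ∈ s, μ (A a ∩ A i)
          = ∑ p ∈ s.offDiag ∪ {a} ×ˢ s, μ (A p.1 ∩ A p.2) := by
            rw [Finset.sum_union hd1]
            congr 1
            rw [Finset.singleton_product, Finset.sum_map]
            rfl
        _ ≤ _ := Finset.sum_le_sum_of_subset Finset.subset_union_left
    rw [Finset.sum_insert ha, Finset.set_biUnion_insert a s A]
    calc μ (A a) + ∑ i ∈ s, μ (A i)
        ≤ μ (A a) + (μ (⋃ i ∈ s, A i) + ∑ p ∈ s.offDiag, μ (A p.1 ∩ A p.2)) := by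
          exact add_le_add_right ih _
      _ = (μ (A a) + μ (⋃ i ∈ s, A i)) + ∑ p ∈ s.offDiag, μ (A p.1 ∩ A p.2) := by ring
      _ = (μ (A a ∪ ⋃ i ∈ s, A i) + μ (A a ∩ ⋃ i ∈ s, A i)) + ∑ p ∈ s.offDiag, μ (A p.1 ∩ A p.2) := by rw [key]
      _ ≤ μ (A a ∪ ⋃ i ∈ s, A i) + ((∑ p ∈ s.offDiag, μ (A p.1 ∩ A p.2)) + ∑ i ∈ s, μ (A a ∩ A i)) := by
          rw [add_assoc]
          exact add_le_add_right (by rw [add_comm]; exact add_le_add_right hint _) _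
      _ ≤ _ := add_le_add_right hoff _
lemma alpha_bound (w0 w1 e : ℝ) (he : 0 ≤ e) (hd : 0 < Real.sqrt (w0 ^ 2 + w1 ^ 2)) :
    volume ({α : ℝ | |w0 * Real.cos α + w1 * Real.sin α| ≤ e} ∩ Set.Ico 0 (2 * π)) ≤
      ENNReal.ofReal (10 * Real.arcsin (e / Real.sqrt (w0 ^ 2 + w1 ^ 2))) := by
  set d := Real.sqrt (w0 ^ 2 + w1 ^ 2) with hdd
  set ζ : ℂ := ⟨w0, w1⟩ with hzeta
  have habs : ‖ζ‖ = d := by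
    rw [Complex.norm_def, Complex.normSq_mk]
    congr 1; ring
  have hz0 : ζ ≠ 0 := by
    intro h
    rw [h] at habs
    simp at habs
    exact hd.ne' (habs ▸ rfl)
  obtain ⟨θ, hθ⟩ : ∃ θ : ℝ, θ = ζ.arg := ⟨_, rfl⟩
  have hcosθ : Real.cos θ = w0 / d := by
    rw [hθ, Complex.cos_arg hz0, habs]
  have hsinθ : Real.sin θ = w1 / d := by
    rw [hθ, Complex.sin_arg, habs]
  have hrepr : ∀ α, w0 * Real.cos α + w1 * Real.sin α = d * Real.cos (α - θ) := by
    intro α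
    rw [Real.cos_sub, hcosθ, hsinθ]
    field_simp
  rcases le_or_gt 1 (e / d) with hcase | hcase
  · -- trivial case
    rw [Real.arcsin_of_one_le hcase]
    calc volume ({α : ℝ | |w0 * Real.cos α + w1 * Real.sin α| ≤ e} ∩ Set.Ico 0 (2 * π))
        ≤ volume (Set.Ico (0:ℝ) (2 * π)) := measure_mono inter_subset_right
      _ = ENNReal.ofReal (2 * π) := by rw [Real.volume_Ico]; norm_num
      _ ≤ ENNReal.ofReal (10 * (π / 2)) := by
          apply ENNReal.ofReal_le_ofReal; nlinarith [Real.pi_pos]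
  · obtain ⟨s, hs⟩ : ∃ s : ℝ, s = Real.arcsin (e / d) := ⟨_, rfl⟩
    rw [← hs]
    have hs0 : 0 ≤ s := hs ▸ Real.arcsin_nonneg.2 (by positivity)
    have hs2 : s ≤ π / 2 := hs ▸ Real.arcsin_le_pi_div_two _
    have hed : (0:ℝ) ≤ e / d := by positivity
    have hsin_s : Real.sin s = e / d := hs ▸ Real.sin_arcsin (by linarith) hcase.le
    -- containment
    have hsub : {α : ℝ | |w0 * Real.cos α + w1 * Real.sin α| ≤ e} ∩ Set.Ico 0 (2 * π) ⊆
        ⋃ k ∈ Finset.Icc (-2 : ℤ) 2,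
          Set.Icc (θ + k * π + π / 2 - s) (θ + k * π + π / 2 + s) := by
      rintro α ⟨hα, hα0, hα2⟩
      have hcos : |Real.cos (α - θ)| ≤ e / d := by
        rw [Set.mem_setOf_eq, hrepr α, abs_mul, abs_of_pos hd] at hα
        rw [← le_div_iff₀' hd] at hα  -- d * |cos| ≤ e → |cos| ≤ e / d
        exact hα
      obtain ⟨k, hk⟩ : ∃ k : ℤ, k = round ((α - θ - π / 2) / π) := ⟨_, rfl⟩
      obtain ⟨γ, hγ⟩ : ∃ γ : ℝ, γ = α - θ - π / 2 - k * π := ⟨_, rfl⟩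
      have hγ2 : |γ| ≤ π / 2 := by
        have h1 : |(α - θ - π / 2) / π - k| ≤ 1 / 2 := by rw [hk]; exact abs_sub_round _
        have h2 : γ = π * ((α - θ - π / 2) / π - k) := by
          rw [hγ, mul_sub, mul_div_assoc', mul_div_cancel_left₀ _ Real.pi_pos.ne']; ring
        rw [h2, abs_mul, abs_of_pos Real.pi_pos]
        nlinarith [Real.pi_pos]
      have hαeq : α - θ = γ + π / 2 + k * π := by rw [hγ]; ring
      have hsinkπ : Real.sin (k * π) = 0 := Real.sin_int_mul_pi k
      have hcoskπ : |Real.cos (k * π)| = 1 := by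
        have h3 := Real.sin_sq_add_cos_sq ((k : ℝ) * π)
        rw [hsinkπ] at h3
        rw [← Real.sqrt_sq_eq_abs]
        rw [show Real.cos ((k:ℝ) * π) ^ 2 = 1 by nlinarith, Real.sqrt_one]
      have hcosγ : |Real.cos (α - θ)| = |Real.sin γ| := by
        rw [hαeq, Real.cos_add, hsinkπ, mul_zero, sub_zero, abs_mul, hcoskπ, mul_one,
          Real.cos_add_pi_div_two, abs_neg]
      have hsinγ : |Real.sin γ| ≤ Real.sin s := by rw [hsin_s, ← hcosγ]; exact hcos
      have habsγ : |γ| ≤ s := by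
        have h4 : Real.sin |γ| = |Real.sin γ| := by
          have hpi := Real.pi_pos
          rcases le_or_gt 0 γ with h | h
          · have hγle : γ ≤ π := by
              have := (abs_le.1 hγ2).2; linarith
            rw [abs_of_nonneg h, abs_of_nonneg (Real.sin_nonneg_of_nonneg_of_le_pi h hγle)]
          · have hγle : -γ ≤ π := by
              have := (abs_le.1 hγ2).1; linarith
            have hsneg : Real.sin γ ≤ 0 := by
              have := Real.sin_nonneg_of_nonneg_of_le_pi (le_of_lt (neg_pos.2 h)) hγle
              rw [Real.sin_neg] at this; linarith
            rw [abs_of_neg h, Real.sin_neg, abs_of_nonpos hsneg]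
        have h5 : Real.arcsin (Real.sin |γ|) = |γ| :=
          Real.arcsin_sin (by
            have := abs_nonneg γ; linarith [Real.pi_div_two_pos]) hγ2
        rw [← h5, h4]
        calc Real.arcsin |Real.sin γ| ≤ Real.arcsin (Real.sin s) :=
              Real.monotone_arcsin hsinγ
          _ = s := Real.arcsin_sin (by linarith) hs2
      have hkrange : k ∈ Finset.Icc (-2 : ℤ) 2 := by
        rw [Finset.mem_Icc]
        have hθ1 : -π < θ := hθ ▸ Complex.neg_pi_lt_arg ζ
        have hθ2 : θ ≤ π := hθ ▸ Complex.arg_le_pi ζ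
        have hγ3 : -(π/2) ≤ γ := (abs_le.1 hγ2).1
        have hγ4 : γ ≤ π/2 := (abs_le.1 hγ2).2
        have hkπ : (k : ℝ) * π = α - θ - π / 2 - γ := by rw [hγ]; ring
        have hpi := Real.pi_pos
        constructor
        · have h6 : (-2 : ℝ) * π ≤ (k:ℝ) * π := by rw [hkπ]; linarith
          have h7 : (-2 : ℝ) ≤ (k:ℝ) := le_of_mul_le_mul_right h6 Real.pi_pos
          exact_mod_cast h7
        · have h6 : (k:ℝ) * π < 3 * π := by rw [hkπ]; linarith
          have h7 : (k:ℝ) < 3 := lt_of_mul_lt_mul_right h6 Real.pi_pos.le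
          have : k < 3 := by exact_mod_cast h7
          omega
      refine Set.mem_biUnion hkrange ?_
      rw [Set.mem_Icc]
      have hb1 := (abs_le.1 habsγ).1
      have hb2 := (abs_le.1 habsγ).2
      constructor <;> linarith [hγ]
    calc volume _ ≤ volume (⋃ k ∈ Finset.Icc (-2 : ℤ) 2,
          Set.Icc (θ + k * π + π / 2 - s) (θ + k * π + π / 2 + s)) := measure_mono hsub
      _ ≤ ∑ k ∈ Finset.Icc (-2 : ℤ) 2,
            volume (Set.Icc (θ + k * π + π / 2 - s) (θ + k * π + π / 2 + s)) :=
          measure_biUnion_finset_le _ _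
      _ = ∑ k ∈ Finset.Icc (-2 : ℤ) 2, ENNReal.ofReal (2 * s) := by
          apply Finset.sum_congr rfl
          intro k _
          rw [Real.volume_Icc]
          congr 1; ring
      _ = 5 * ENNReal.ofReal (2 * s) := by
          rw [Finset.sum_const, show (Finset.Icc (-2:ℤ) 2).card = 5 from rfl, nsmul_eq_mul]
          norm_num
      _ = ENNReal.ofReal (10 * s) := by
          rw [show (5 : ENNReal) = ENNReal.ofReal 5 by norm_num,
            ← ENNReal.ofReal_mul (by norm_num)]
          congr 1; ring

lemma hit_set_eq (α : ℝ) (z : EuclideanSpace ℝ (Fin 2)) (r : ℝ) (hr : 0 ≤ r) :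
    {t' : ℝ | (lineSet α t' ∩ Metric.closedBall z r).Nonempty}
      = Set.Icc (aCo z α - r) (aCo z α + r) := by
  ext t
  rw [Set.mem_setOf_eq, hit_ball_iff α t z r hr, Set.mem_Icc, abs_le]
  unfold aCo
  constructor <;> intro h <;> constructor <;> linarith [h.1, h.2]

lemma lineMeas_ball (z : EuclideanSpace ℝ (Fin 2)) (r : ℝ) (hr : 0 ≤ r) :
    lineMeas (Metric.closedBall z r) = ENNReal.ofReal (2 * π * r) := by
  unfold lineMeas
  rw [← lint_clip z r hr]
  apply setLIntegral_congr_fun measurableSet_Ico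
  intro α _
  dsimp only
  rw [hit_set_eq α z r hr, inner_int _ measurableSet_Icc, vol_Icc_Ioi, clip_eq r (aCo z α) hr]

lemma vol_pair_measurable (u v u' v' : ℝ) :
    volume (Set.Icc u v ∩ Set.Icc u' v' ∩ Set.Ioi 0)
      = ENNReal.ofReal (min v v' - max (max u u') 0) := by
  rw [Set.Icc_inter_Icc, vol_Icc_Ioi]

lemma pair_bound (zi zj : EuclideanSpace ℝ (Fin 2)) (ri rj R vρ c : ℝ)
    (hri : 0 ≤ ri) (hrj : 0 ≤ rj) (hriR : ri ≤ R) (hrjR : rj ≤ R) (hR : 0 < R)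
    (hsep : R ^ 3 < dist zi zj) (harc : 4 * R * Real.arcsin (2 / R ^ 2) ≤ c * vρ⁻¹) :
    (∫⁻ α in Set.Ico (0:ℝ) (2 * π),
        volume (Set.Icc (aCo zi α - ri) (aCo zi α + ri)
          ∩ Set.Icc (aCo zj α - rj) (aCo zj α + rj) ∩ Set.Ioi 0))
      ≤ ENNReal.ofReal (5 * (c * vρ⁻¹)) := by
  set w0 := zi 0 - zj 0 with hw0
  set w1 := zi 1 - zj 1 with hw1
  set S := {α : ℝ | |w0 * Real.cos α + w1 * Real.sin α| ≤ ri + rj} with hSdef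
  have hScont : Continuous fun α => |w0 * Real.cos α + w1 * Real.sin α| := by fun_prop
  have hS : MeasurableSet S := hScont.measurable measurableSet_Iic
  have hdist : dist zi zj = Real.sqrt (w0 ^ 2 + w1 ^ 2) := by
    rw [EuclideanSpace.dist_eq, Fin.sum_univ_two, Real.dist_eq, Real.dist_eq, sq_abs, sq_abs]
  have hd : 0 < Real.sqrt (w0 ^ 2 + w1 ^ 2) := by
    rw [← hdist]; exact lt_trans (by positivity) hsep
  have hpoint : ∀ α, volume (Set.Icc (aCo zi α - ri) (aCo zi α + ri)
      ∩ Set.Icc (aCo zj α - rj) (aCo zj α + rj) ∩ Set.Ioi 0)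
      ≤ S.indicator (fun _ => ENNReal.ofReal (2 * R)) α := by
    intro α
    by_cases hα : α ∈ S
    · rw [Set.indicator_of_mem hα]
      calc volume _ ≤ volume (Set.Icc (aCo zi α - ri) (aCo zi α + ri)) :=
            measure_mono (fun t ht => ht.1.1)
        _ ≤ ENNReal.ofReal (2 * R) := by
            rw [Real.volume_Icc]; apply ENNReal.ofReal_le_ofReal; linarith
    · rw [Set.indicator_of_notMem hα]
      have hempty : Set.Icc (aCo zi α - ri) (aCo zi α + ri)
          ∩ Set.Icc (aCo zj α - rj) (aCo zj α + rj) ∩ Set.Ioi 0 = ∅ := by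
        rw [Set.eq_empty_iff_forall_notMem]
        rintro t ⟨⟨⟨h1, h2⟩, h3, h4⟩, -⟩
        apply hα
        have heq : aCo zi α - aCo zj α = w0 * Real.cos α + w1 * Real.sin α := by
          unfold aCo; rw [hw0, hw1]; ring
        rw [Set.mem_setOf_eq, ← heq]
        rw [abs_le]
        constructor <;> linarith
      rw [hempty, measure_empty]
  calc (∫⁻ α in Set.Ico (0:ℝ) (2 * π), volume _)
      ≤ ∫⁻ α in Set.Ico (0:ℝ) (2 * π), S.indicator (fun _ => ENNReal.ofReal (2 * R)) α :=
        lintegral_mono hpoint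
    _ = ENNReal.ofReal (2 * R) * volume (S ∩ Set.Ico 0 (2 * π)) := by
        rw [lintegral_indicator_const hS, Measure.restrict_apply hS]
    _ ≤ ENNReal.ofReal (2 * R) * ENNReal.ofReal (10 * Real.arcsin ((ri + rj) / Real.sqrt (w0 ^ 2 + w1 ^ 2))) := by
        apply mul_le_mul_right (alpha_bound w0 w1 (ri + rj) (by linarith) hd)
    _ ≤ ENNReal.ofReal (5 * (c * vρ⁻¹)) := by
        rw [← ENNReal.ofReal_mul (by linarith)]
        apply ENNReal.ofReal_le_ofReal
        have hx : (ri + rj) / Real.sqrt (w0 ^ 2 + w1 ^ 2) ≤ 2 / R ^ 2 := by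
          have h1 : (ri + rj) / Real.sqrt (w0 ^ 2 + w1 ^ 2) ≤ (2 * R) / R ^ 3 := by
            apply div_le_div₀ (by positivity) (by linarith) (by positivity)
            rw [← hdist]; exact hsep.le
          have h2 : (2 * R) / R ^ 3 = 2 / R ^ 2 := by
            field_simp
          linarith
        have m1 : Real.arcsin ((ri + rj) / Real.sqrt (w0 ^ 2 + w1 ^ 2)) ≤ Real.arcsin (2 / R ^ 2) :=
          Real.monotone_arcsin hx
        have m2 : 0 ≤ Real.arcsin ((ri + rj) / Real.sqrt (w0 ^ 2 + w1 ^ 2)) :=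
          Real.arcsin_nonneg.2 (by positivity)
        nlinarith
open MeasureTheory Real Set


/-- For `K ≥ 2` pairwise disjoint, well-separated discs (`|z_i − z_j| > R³`) with radii
`r_i ∈ (v_ρ, R]` such that `4R arcsin(2/R²) ≤ c v_ρ⁻¹`, the measure of lines hitting
the union satisfies `2π ∑ r_i − c' v_ρ⁻¹ ≤ μ(⋃ B(z_i,r_i)) ≤ 2π ∑ r_i`, where `c'`
depends only on `K` (and `c`). -/
theorem lineMeas_union_discs (K : ℕ) (hK : 2 ≤ K) (c : ℝ) (hc : 0 < c) :
    ∃ c' : ℝ, 0 < c' ∧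
      ∀ (vρ R : ℝ) (z : Fin K → EuclideanSpace ℝ (Fin 2)) (rad : Fin K → ℝ),
        0 < vρ → (∀ i, vρ < rad i) → (∀ i, rad i ≤ R) → (∃ i, rad i = R) →
        (∀ i j, i ≠ j → R ^ 3 < dist (z i) (z j)) →
        (∀ i j, i ≠ j →
          Disjoint (Metric.closedBall (z i) (rad i)) (Metric.closedBall (z j) (rad j))) →
        4 * R * Real.arcsin (2 / R ^ 2) ≤ c * vρ⁻¹ →
        ENNReal.ofReal (2 * π * ∑ i, rad i - c' * vρ⁻¹)
            ≤ lineMeas (⋃ i, Metric.closedBall (z i) (rad i)) ∧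
          lineMeas (⋃ i, Metric.closedBall (z i) (rad i))
            ≤ ENNReal.ofReal (2 * π * ∑ i, rad i) := by
  
  refine ⟨5 * c * K ^ 2, by positivity, ?_⟩
  intro vρ R z rad hvρ hrad hradR hexR hsep hdisj harc
  have hr0 : ∀ i, 0 ≤ rad i := fun i => (hvρ.trans (hrad i)).le
  have hR : 0 < R := by
    obtain ⟨i, hi⟩ := hexR
    exact hi ▸ hvρ.trans (hrad i)
  set T : Fin K → ℝ → Set ℝ :=
    fun i α => Set.Icc (aCo (z i) α - rad i) (aCo (z i) α + rad i) with hT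
  -- rewriting of lineMeas of the union
  have hUnionEq : lineMeas (⋃ i, Metric.closedBall (z i) (rad i))
      = ∫⁻ α in Set.Ico (0:ℝ) (2 * π), volume ((⋃ i, T i α) ∩ Set.Ioi 0) := by
    unfold lineMeas
    apply setLIntegral_congr_fun measurableSet_Ico
    intro α _
    have hset : {t' : ℝ | (lineSet α t' ∩ ⋃ i, Metric.closedBall (z i) (rad i)).Nonempty}
        = ⋃ i, T i α := by
      ext t
      rw [Set.mem_setOf_eq, Set.inter_iUnion, Set.nonempty_iUnion]
      simp only [Set.mem_iUnion]
      exact exists_congr fun i => by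
        show _ ↔ t ∈ Set.Icc (aCo (z i) α - rad i) (aCo (z i) α + rad i)
        rw [← hit_set_eq α (z i) (rad i) (hr0 i)]; exact Iff.rfl
    dsimp only
    rw [hset, inner_int _ (MeasurableSet.iUnion fun i => measurableSet_Icc)]
  -- the volume identity for single sets
  have hvolT : ∀ i α, volume (T i α ∩ Set.Ioi 0)
      = ENNReal.ofReal (clip (rad i) (aCo (z i) α)) := by
    intro i α
    rw [hT]
    rw [vol_Icc_Ioi, clip_eq _ _ (hr0 i)]
  have hmeasT : ∀ i, Measurable fun α => volume (T i α ∩ Set.Ioi 0) := by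
    intro i
    simp_rw [hvolT i]
    apply Measurable.ennreal_ofReal
    exact ((clip_cont (rad i)).comp (aCo_cont (z i))).measurable
  have hlintT : ∀ i, (∫⁻ α in Set.Ico (0:ℝ) (2 * π), volume (T i α ∩ Set.Ioi 0))
      = ENNReal.ofReal (2 * π * rad i) := by
    intro i
    simp_rw [hvolT i]
    exact lint_clip (z i) (rad i) (hr0 i)
  -- UPPER BOUND
  have hupper : lineMeas (⋃ i, Metric.closedBall (z i) (rad i))
      ≤ ENNReal.ofReal (2 * π * ∑ i, rad i) := by
    rw [hUnionEq]
    calc (∫⁻ α in Set.Ico (0:ℝ) (2 * π), volume ((⋃ i, T i α) ∩ Set.Ioi 0))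
        ≤ ∫⁻ α in Set.Ico (0:ℝ) (2 * π), ∑ i, volume (T i α ∩ Set.Ioi 0) := by
          apply lintegral_mono
          intro α
          dsimp only
          rw [Set.iUnion_inter]
          exact measure_iUnion_fintype_le _ _
      _ = ∑ i, ∫⁻ α in Set.Ico (0:ℝ) (2 * π), volume (T i α ∩ Set.Ioi 0) :=
          lintegral_finset_sum _ (fun i _ => hmeasT i)
      _ = ∑ i, ENNReal.ofReal (2 * π * rad i) := by
          exact Finset.sum_congr rfl fun i _ => hlintT i
      _ = ENNReal.ofReal (2 * π * ∑ i, rad i) := by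
          rw [← ENNReal.ofReal_sum_of_nonneg (fun i _ => mul_nonneg (by positivity) (hr0 i))]
          rw [← Finset.mul_sum]
  refine ⟨?_, hupper⟩
  -- LOWER BOUND
  -- pair integrals
  have hvolPair : ∀ (i j : Fin K) α, volume (T i α ∩ T j α ∩ Set.Ioi 0)
      = ENNReal.ofReal (min (aCo (z i) α + rad i) (aCo (z j) α + rad j)
          - max (max (aCo (z i) α - rad i) (aCo (z j) α - rad j)) 0) := by
    intro i j α
    rw [hT]
    exact vol_pair_measurable _ _ _ _
  have hmeasPair : ∀ (i j : Fin K), Measurable fun α => volume (T i α ∩ T j α ∩ Set.Ioi 0) := by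
    intro i j
    simp_rw [hvolPair i j]
    apply Measurable.ennreal_ofReal
    have : Continuous fun α => min (aCo (z i) α + rad i) (aCo (z j) α + rad j)
        - max (max (aCo (z i) α - rad i) (aCo (z j) α - rad j)) 0 := by
      have h1 := aCo_cont (z i); have h2 := aCo_cont (z j); fun_prop
    exact this.measurable
  have hpairBound : ∀ p : Fin K × Fin K, p ∈ (Finset.univ (α := Fin K)).offDiag →
      (∫⁻ α in Set.Ico (0:ℝ) (2 * π), volume (T p.1 α ∩ T p.2 α ∩ Set.Ioi 0))
        ≤ ENNReal.ofReal (5 * (c * vρ⁻¹)) := by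
    rintro ⟨i, j⟩ hp
    have hij : i ≠ j := (Finset.mem_offDiag.1 hp).2.2
    rw [hT]
    exact pair_bound (z i) (z j) (rad i) (rad j) R vρ c (hr0 i) (hr0 j)
      (hradR i) (hradR j) hR (hsep i j hij) harc
  -- Bonferroni pointwise, then integrate
  have hbon : ∀ α, (∑ i, volume (T i α ∩ Set.Ioi 0))
      ≤ volume ((⋃ i, T i α) ∩ Set.Ioi 0)
        + ∑ p ∈ (Finset.univ (α := Fin K)).offDiag, volume (T p.1 α ∩ T p.2 α ∩ Set.Ioi 0) := by
    intro α
    have := bonferroni (volume.restrict (Set.Ioi (0:ℝ))) Finset.univ (fun i => T i α)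
      (fun i => measurableSet_Icc)
    simp only [Measure.restrict_apply (by exact measurableSet_Icc : MeasurableSet (T _ α))] at this
    have hrw : ∀ (s : Set ℝ), MeasurableSet s →
        (volume.restrict (Set.Ioi (0:ℝ))) s = volume (s ∩ Set.Ioi 0) :=
      fun s hs => Measure.restrict_apply hs
    calc (∑ i, volume (T i α ∩ Set.Ioi 0))
        = ∑ i, (volume.restrict (Set.Ioi (0:ℝ))) (T i α) := by
          exact Finset.sum_congr rfl fun i _ => (hrw _ measurableSet_Icc).symm
      _ ≤ (volume.restrict (Set.Ioi (0:ℝ))) (⋃ i ∈ Finset.univ, T i α)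
            + ∑ p ∈ (Finset.univ (α := Fin K)).offDiag,
              (volume.restrict (Set.Ioi (0:ℝ))) (T p.1 α ∩ T p.2 α) :=
          bonferroni _ _ _ (fun i => measurableSet_Icc)
      _ = volume ((⋃ i, T i α) ∩ Set.Ioi 0)
            + ∑ p ∈ (Finset.univ (α := Fin K)).offDiag, volume (T p.1 α ∩ T p.2 α ∩ Set.Ioi 0) := by
          congr 1
          · rw [hrw _ (MeasurableSet.iUnion fun i => MeasurableSet.iUnion fun _ => measurableSet_Icc)]
            congr 2
            simp
            rfl
          · exact Finset.sum_congr rfl fun p _ =>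
              hrw _ (measurableSet_Icc.inter measurableSet_Icc)
  have hkey : ENNReal.ofReal (2 * π * ∑ i, rad i)
      ≤ lineMeas (⋃ i, Metric.closedBall (z i) (rad i))
        + ENNReal.ofReal (5 * c * K ^ 2 * vρ⁻¹) := by
    calc ENNReal.ofReal (2 * π * ∑ i, rad i)
        = ∑ i, ENNReal.ofReal (2 * π * rad i) := by
          rw [← ENNReal.ofReal_sum_of_nonneg (fun i _ => mul_nonneg (by positivity) (hr0 i)),
            ← Finset.mul_sum]
      _ = ∑ i, ∫⁻ α in Set.Ico (0:ℝ) (2 * π), volume (T i α ∩ Set.Ioi 0) :=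
          (Finset.sum_congr rfl fun i _ => (hlintT i).symm)
      _ = ∫⁻ α in Set.Ico (0:ℝ) (2 * π), ∑ i, volume (T i α ∩ Set.Ioi 0) :=
          (lintegral_finset_sum _ (fun i _ => hmeasT i)).symm
      _ ≤ ∫⁻ α in Set.Ico (0:ℝ) (2 * π), (volume ((⋃ i, T i α) ∩ Set.Ioi 0)
            + ∑ p ∈ (Finset.univ (α := Fin K)).offDiag, volume (T p.1 α ∩ T p.2 α ∩ Set.Ioi 0)) :=
          lintegral_mono hbon
      _ = (∫⁻ α in Set.Ico (0:ℝ) (2 * π), volume ((⋃ i, T i α) ∩ Set.Ioi 0))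
            + ∫⁻ α in Set.Ico (0:ℝ) (2 * π),
              ∑ p ∈ (Finset.univ (α := Fin K)).offDiag, volume (T p.1 α ∩ T p.2 α ∩ Set.Ioi 0) :=
          lintegral_add_right _ (by
            apply Finset.measurable_sum
            intro p _
            exact hmeasPair p.1 p.2)
      _ = lineMeas (⋃ i, Metric.closedBall (z i) (rad i))
            + ∫⁻ α in Set.Ico (0:ℝ) (2 * π),
              ∑ p ∈ (Finset.univ (α := Fin K)).offDiag, volume (T p.1 α ∩ T p.2 α ∩ Set.Ioi 0) := by
          rw [hUnionEq]
      _ ≤ lineMeas (⋃ i, Metric.closedBall (z i) (rad i))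
            + ENNReal.ofReal (5 * c * K ^ 2 * vρ⁻¹) := by
          apply add_le_add_right
          calc (∫⁻ α in Set.Ico (0:ℝ) (2 * π),
                ∑ p ∈ (Finset.univ (α := Fin K)).offDiag, volume (T p.1 α ∩ T p.2 α ∩ Set.Ioi 0))
              = ∑ p ∈ (Finset.univ (α := Fin K)).offDiag,
                  ∫⁻ α in Set.Ico (0:ℝ) (2 * π), volume (T p.1 α ∩ T p.2 α ∩ Set.Ioi 0) :=
                lintegral_finset_sum _ (fun p _ => hmeasPair p.1 p.2)
            _ ≤ ∑ p ∈ (Finset.univ (α := Fin K)).offDiag, ENNReal.ofReal (5 * (c * vρ⁻¹)) :=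
                Finset.sum_le_sum hpairBound
            _ ≤ ENNReal.ofReal (5 * c * K ^ 2 * vρ⁻¹) := by
                rw [Finset.sum_const, nsmul_eq_mul]
                have hcard : ((Finset.univ (α := Fin K)).offDiag.card : ℝ) ≤ (K : ℝ) ^ 2 := by
                  rw [Finset.offDiag_card]
                  simp only [Finset.card_univ, Fintype.card_fin]
                  calc ((K * K - K : ℕ) : ℝ) ≤ ((K * K : ℕ) : ℝ) := Nat.cast_le.2 (Nat.sub_le _ _)
                    _ = (K : ℝ) ^ 2 := by push_cast; ring
                calc ((Finset.univ (α := Fin K)).offDiag.card : ENNReal) * ENNReal.ofReal (5 * (c * vρ⁻¹))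
                    = ENNReal.ofReal ((Finset.univ (α := Fin K)).offDiag.card * (5 * (c * vρ⁻¹))) := by
                      rw [← ENNReal.ofReal_natCast ((Finset.univ (α := Fin K)).offDiag.card),
                        ← ENNReal.ofReal_mul (by positivity)]
                  _ ≤ ENNReal.ofReal (5 * c * K ^ 2 * vρ⁻¹) := by
                      apply ENNReal.ofReal_le_ofReal
                      have h5 : (0:ℝ) ≤ 5 * (c * vρ⁻¹) := by positivity
                      nlinarith [hcard, h5]
    
  rw [show 2 * π * ∑ i, rad i - 5 * c * ↑K ^ 2 * vρ⁻¹
      = 2 * π * ∑ i, rad i - (5 * c * ↑K ^ 2 * vρ⁻¹) from rfl,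
    ENNReal.ofReal_sub _ (by positivity)]
  exact tsub_le_iff_right.2 hkey
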